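/- The element c = 1 − (1/3)·((12) + (13) + (23)) of ℂ[S_3] is a Lie element (c ∈ L_3), is fixed under conjugation by every σ ∈ S_3, and is central in the Lie algebra L_3: [c, x] = 0 for every x ∈ L_3. -/

import Mathlib

/-- The wedge product `v₁ ∧ ⋯ ∧ vₘ` of a family of vectors, as an element of the `m`-th
exterior power `⋀[k]^m V`. -/
noncomputable def wedge (k : Type*) [Field k] (V : Type*) [AddCommGroup V] [Module k V]
    (m : ℕ) (v : Fin m → V) : ⋀[k]^m V :=
  ⟨ExteriorAlgebra.ιMulti k m v, ExteriorAlgebra.ιMulti_range k m (Set.mem_range_self v)⟩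

/-- The permutation representation of the symmetric group `S_n` on `ℂⁿ`: a permutation `σ`
sends the basis vector `xᵢ` to `x_{σ i}`, i.e. it acts on coordinate functions by
`(σ · v) i = v (σ⁻¹ i)`. -/
noncomputable def permRep (n : ℕ) : Representation ℂ (Equiv.Perm (Fin n)) (Fin n → ℂ) where
  toFun σ := LinearMap.funLeft ℂ ℂ ⇑σ⁻¹
  map_one' := by ext v i; simp [LinearMap.funLeft]
  map_mul' σ τ := by ext v i; simp [LinearMap.funLeft]

section Aux

variable {V N : Type*} [AddCommGroup V] [Module ℂ V] [AddCommGroup N] [Module ℂ N]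

/-- Expansion of an alternating map applied to `v - λ • e` (all slots shifted by multiples
of the same vector `e`): cross terms vanish by alternation. -/
lemma alt_sub_expand : ∀ (m : ℕ) (f : V [⋀^Fin m]→ₗ[ℂ] N) (v : Fin m → V) (lam : Fin m → ℂ)
    (e : V), f (fun p => v p - lam p • e)
      = f v - ∑ p, lam p • f (Function.update v p e)
  | 0, f, v, lam, e => by
    rw [Subsingleton.elim (fun p => v p - lam p • e) v]; simp
  | (m+1), f, v, lam, e => by
    have h0 : (fun p => v p - lam p • e)
        = Matrix.vecCons (v 0 - lam 0 • e)
            (fun p => Fin.tail v p - Fin.tail lam p • e) := by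
      funext p
      refine Fin.cases rfl (fun i => rfl) p
    rw [h0]
    have hc : ∀ (x : V) (w : Fin m → V), f (Matrix.vecCons x w) = f.curryLeft x w := fun _ _ => rfl
    rw [hc]
    rw [map_sub, map_smul]
    simp only [AlternatingMap.sub_apply, AlternatingMap.smul_apply]
    rw [alt_sub_expand m (f.curryLeft (v 0)) (Fin.tail v) (Fin.tail lam) e,
        alt_sub_expand m (f.curryLeft e) (Fin.tail v) (Fin.tail lam) e]
    have hzero : ∀ p : Fin m, f.curryLeft e (Function.update (Fin.tail v) p e) = 0 := by
      intro p
      rw [← hc]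
      refine f.map_eq_zero_of_eq _ (i := 0) (j := p.succ) ?_ (Fin.succ_ne_zero p).symm
      simp [Matrix.cons_val_succ]
    simp only [hzero, smul_zero, Finset.sum_const_zero, sub_zero]
    have hv : f v = f.curryLeft (v 0) (Fin.tail v) := by rw [← hc, ← Fin.cons_self_tail v]; rfl
    have hcurry0 : f.curryLeft e (Fin.tail v) = f (Function.update v 0 e) := by
      rw [← hc]
      congr 1
      funext p
      refine Fin.cases ?_ (fun i => ?_) p
      · simp
      · rw [Function.update, dif_neg (Fin.succ_ne_zero i)]; simp [Fin.tail]
    have hsucc : ∀ p : Fin m, f.curryLeft (v 0) (Function.update (Fin.tail v) p e)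
        = f (Function.update v p.succ e) := by
      intro p
      rw [← hc]
      congr 1
      rw [show Fin.tail v = fun i => v i.succ from rfl]
      funext q
      refine Fin.cases ?_ (fun i => ?_) q
      · rw [Function.update, dif_neg (Ne.symm (Fin.succ_ne_zero p))]; simp
      · rcases eq_or_ne i p with rfl | h
        · simp
        · simp [Function.update, h, Fin.succ_inj, (Fin.succ_injective m).ne h]
    simp only [hsucc]
    rw [Fin.sum_univ_succ, hv, hcurry0]
    simp only [Fin.tail]
    abel

/-- Slot-by-slot expansion for the derivation-type action. -/
lemma alt_B_expand (m : ℕ) (f : V [⋀^Fin m]→ₗ[ℂ] N) (v : Fin m → V) (lam : Fin m → ℂ)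
    (e : V) : ∑ p, f (Function.update v p (v p - lam p • e))
      = (m : ℂ) • f v - ∑ p, lam p • f (Function.update v p e) := by
  have h1 : ∀ p : Fin m, f (Function.update v p (v p - lam p • e))
      = f v - lam p • f (Function.update v p e) := by
    intro p
    rw [f.map_update_sub, f.map_update_smul, Function.update_eq_self]
  simp_rw [h1]
  rw [Finset.sum_sub_distrib, Finset.sum_const, Finset.card_univ, Fintype.card_fin,
    Nat.cast_smul_eq_nsmul]

end Aux

lemma permRep_swap (a b : Fin 3) (u : Fin 3 → ℂ) :
    permRep 3 (Equiv.swap a b) u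
      = u - (u a - u b) • (Pi.single a 1 - Pi.single b 1) := by
  funext k
  have h1 : permRep 3 (Equiv.swap a b) u k = u (Equiv.swap a b k) := by
    simp [permRep, LinearMap.funLeft]
  rw [h1]
  simp only [Pi.sub_apply, Pi.smul_apply, Pi.single_apply, Equiv.swap_apply_def, smul_eq_mul]
  split_ifs <;> simp_all

/-- The key computation: for a transposition `τ`, `B_m(τ) - A_m(τ) = (m-1)·id` on wedges. -/
lemma key_swap (m : ℕ) (a b : Fin 3) (v : Fin m → (Fin 3 → ℂ)) :
    (∑ p : Fin m, wedge ℂ (Fin 3 → ℂ) m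
        (Function.update v p (permRep 3 (Equiv.swap a b) (v p))))
      - wedge ℂ (Fin 3 → ℂ) m (fun p => permRep 3 (Equiv.swap a b) (v p))
      = ((m : ℂ) - 1) • wedge ℂ (Fin 3 → ℂ) m v := by
  set lam : Fin m → ℂ := fun p => v p a - v p b with hlam
  set e : Fin 3 → ℂ := Pi.single a 1 - Pi.single b 1 with he
  have hperm : ∀ p, permRep 3 (Equiv.swap a b) (v p) = v p - lam p • e := fun p =>
    permRep_swap a b (v p)
  apply Subtype.ext
  push_cast [AddSubmonoidClass.coe_finset_sum]
  simp only [wedge, hperm]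
  rw [show (fun p => v p - lam p • e) = fun p => v p - lam p • e from rfl]
  rw [alt_sub_expand m (ExteriorAlgebra.ιMulti ℂ m) v lam e,
    alt_B_expand m (ExteriorAlgebra.ιMulti ℂ m) v lam e]
  set F := ExteriorAlgebra.ιMulti ℂ m (M := Fin 3 → ℂ)
  set S := ∑ p, lam p • F (Function.update v p e)
  rw [sub_smul, one_smul]
  abel

set_option maxHeartbeats 2000000 in
theorem statement14
    (A B : (m : ℕ) → Equiv.Perm (Fin 3) → Module.End ℂ (⋀[ℂ]^m (Fin 3 → ℂ)))
    (hA : ∀ (m : ℕ) (σ : Equiv.Perm (Fin 3)) (v : Fin m → (Fin 3 → ℂ)),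
      A m σ (wedge ℂ (Fin 3 → ℂ) m v) = wedge ℂ (Fin 3 → ℂ) m fun p => permRep 3 σ (v p))
    (hB : ∀ (m : ℕ) (σ : Equiv.Perm (Fin 3)) (v : Fin m → (Fin 3 → ℂ)),
      B m σ (wedge ℂ (Fin 3 → ℂ) m v) =
        ∑ p : Fin m, wedge ℂ (Fin 3 → ℂ) m (Function.update v p (permRep 3 σ (v p))))
    (Ahat Bhat : (m : ℕ) →
      MonoidAlgebra ℂ (Equiv.Perm (Fin 3)) →ₗ[ℂ] Module.End ℂ (⋀[ℂ]^m (Fin 3 → ℂ)))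
    (hAhat : ∀ (m : ℕ) (σ : Equiv.Perm (Fin 3)), Ahat m (MonoidAlgebra.single σ 1) = A m σ)
    (hBhat : ∀ (m : ℕ) (σ : Equiv.Perm (Fin 3)), Bhat m (MonoidAlgebra.single σ 1) = B m σ) :
    let L : Set (MonoidAlgebra ℂ (Equiv.Perm (Fin 3))) := {x | ∀ m ≤ 3, Ahat m x = Bhat m x}
    let c : MonoidAlgebra ℂ (Equiv.Perm (Fin 3)) :=
      1 - ((1 : ℂ) / 3) •
        (MonoidAlgebra.single (Equiv.swap 0 1) 1 + MonoidAlgebra.single (Equiv.swap 0 2) 1 +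
          MonoidAlgebra.single (Equiv.swap 1 2) 1)
    c ∈ L ∧
      (∀ σ : Equiv.Perm (Fin 3),
        MonoidAlgebra.single σ 1 * c * MonoidAlgebra.single σ⁻¹ (1 : ℂ) = c) ∧
      ∀ x ∈ L, c * x - x * c = 0 := by
  intro L c
  -- conjugation invariance
  have hconj : ∀ σ : Equiv.Perm (Fin 3),
      MonoidAlgebra.single σ 1 * c * MonoidAlgebra.single σ⁻¹ (1 : ℂ) = c := by
    intro σ
    have hms : ∀ σ : Equiv.Perm (Fin 3),
        ({σ * Equiv.swap 0 1 * σ⁻¹, σ * Equiv.swap 0 2 * σ⁻¹, σ * Equiv.swap 1 2 * σ⁻¹} :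
          Multiset (Equiv.Perm (Fin 3))) = {Equiv.swap 0 1, Equiv.swap 0 2, Equiv.swap 1 2} := by
      set_option maxHeartbeats 2000000 in decide
    have hsum := congrArg
      (fun s : Multiset (Equiv.Perm (Fin 3)) =>
        (s.map (fun g => MonoidAlgebra.single g (1 : ℂ))).sum) (hms σ)
    simp only [Multiset.insert_eq_cons, Multiset.map_cons, Multiset.map_singleton,
      Multiset.sum_cons, Multiset.sum_singleton] at hsum
    simp only [c, mul_sub, sub_mul, mul_one, one_mul, mul_smul_comm, smul_mul_assoc,
      mul_add, add_mul, MonoidAlgebra.single_mul_single, one_mul, mul_one]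
    rw [mul_inv_cancel σ]
    congr 1
    rw [add_assoc, hsum, ← add_assoc]
  -- centrality in the whole group algebra
  have hcomm : ∀ x : MonoidAlgebra ℂ (Equiv.Perm (Fin 3)), c * x = x * c := by
    intro x
    induction x using MonoidAlgebra.induction_on with
    | of σ =>
      have h := hconj σ
      have h2 : MonoidAlgebra.single σ (1 : ℂ) * c
          = c * MonoidAlgebra.single σ (1 : ℂ) := by
        calc MonoidAlgebra.single σ (1 : ℂ) * c
            = (MonoidAlgebra.single σ 1 * c * MonoidAlgebra.single σ⁻¹ (1 : ℂ)) *
              MonoidAlgebra.single σ (1 : ℂ) := by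
              rw [mul_assoc, mul_assoc, MonoidAlgebra.single_mul_single, inv_mul_cancel,
                mul_one, ← MonoidAlgebra.one_def, mul_one]
          _ = c * MonoidAlgebra.single σ (1 : ℂ) := by rw [h]
      exact h2.symm
    | add x y hx hy => rw [mul_add, add_mul, hx, hy]
    | smul r x hx => rw [mul_smul_comm, smul_mul_assoc, hx]
  refine ⟨?_, hconj, fun x _ => by rw [hcomm x, sub_self]⟩
  -- c is a Lie element
  intro m _
  -- span of wedges is everything
  have htop : Submodule.span ℂ (Set.range (wedge ℂ (Fin 3 → ℂ) m)) = ⊤ := by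
    apply Submodule.map_injective_of_injective
      (Submodule.injective_subtype (⋀[ℂ]^m (Fin 3 → ℂ)))
    rw [Submodule.map_span, Submodule.map_subtype_top]
    rw [← Set.range_comp]
    exact ExteriorAlgebra.ιMulti_span_fixedDegree ℂ m
  refine LinearMap.ext_on htop ?_
  rintro _ ⟨v, rfl⟩
  -- expand c through Ahat/Bhat
  have hc1 : Ahat m c = Ahat m 1 - ((1:ℂ)/3) •
      (A m (Equiv.swap 0 1) + A m (Equiv.swap 0 2) + A m (Equiv.swap 1 2)) := by
    simp only [c, map_sub, map_smul, map_add, hAhat]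
  have hc2 : Bhat m c = Bhat m 1 - ((1:ℂ)/3) •
      (B m (Equiv.swap 0 1) + B m (Equiv.swap 0 2) + B m (Equiv.swap 1 2)) := by
    simp only [c, map_sub, map_smul, map_add, hBhat]
  rw [hc1, hc2, MonoidAlgebra.one_def, hAhat, hBhat]
  simp only [LinearMap.sub_apply, LinearMap.smul_apply, LinearMap.add_apply]
  have hA1 : A m 1 (wedge ℂ (Fin 3 → ℂ) m v) = wedge ℂ (Fin 3 → ℂ) m v := by
    rw [hA]
    have h1 : (fun p => permRep 3 (1 : Equiv.Perm (Fin 3)) (v p)) = v := by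
      funext p; rw [map_one]; rfl
    rw [h1]
  have hB1 : B m 1 (wedge ℂ (Fin 3 → ℂ) m v) = (m : ℂ) • wedge ℂ (Fin 3 → ℂ) m v := by
    rw [hB]
    have : ∀ p : Fin m, Function.update v p (permRep 3 1 (v p)) = v := by
      intro p
      rw [map_one]
      exact Function.update_eq_self p v
    simp_rw [this]
    rw [Finset.sum_const, Finset.card_univ, Fintype.card_fin, Nat.cast_smul_eq_nsmul]
  rw [hA1, hB1, hA m, hA m, hA m, hB m, hB m, hB m]
  -- use the key lemma for each transposition
  have k1 := key_swap m 0 1 v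
  have k2 := key_swap m 0 2 v
  have k3 := key_swap m 1 2 v
  set w := wedge ℂ (Fin 3 → ℂ) m v
  set A1 := wedge ℂ (Fin 3 → ℂ) m (fun p => permRep 3 (Equiv.swap 0 1) (v p))
  set A2 := wedge ℂ (Fin 3 → ℂ) m (fun p => permRep 3 (Equiv.swap 0 2) (v p))
  set A3 := wedge ℂ (Fin 3 → ℂ) m (fun p => permRep 3 (Equiv.swap 1 2) (v p))
  set B1 := ∑ p : Fin m, wedge ℂ (Fin 3 → ℂ) m
    (Function.update v p (permRep 3 (Equiv.swap 0 1) (v p)))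
  set B2 := ∑ p : Fin m, wedge ℂ (Fin 3 → ℂ) m
    (Function.update v p (permRep 3 (Equiv.swap 0 2) (v p)))
  set B3 := ∑ p : Fin m, wedge ℂ (Fin 3 → ℂ) m
    (Function.update v p (permRep 3 (Equiv.swap 1 2) (v p)))
  have e1 : B1 = A1 + ((m : ℂ) - 1) • w := by rw [← k1]; abel
  have e2 : B2 = A2 + ((m : ℂ) - 1) • w := by rw [← k2]; abel
  have e3 : B3 = A3 + ((m : ℂ) - 1) • w := by rw [← k3]; abel
  rw [e1, e2, e3]
  module
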